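/- arXiv:math/0406255 — 3 statements merged into one kernel-verified Lean document; each statement's English description precedes it below -/
import Mathlib

section
/- Let k ∈ ℤ with k ≠ 0 and let E : ℂ → ℂ, E(z) = kπ·sinh(z), i.e. E(z) = a·e^z + b·e^{−z} with a = kπ/2, b = −kπ/2. Then the set of critical values of E is {kπi, −kπi}; E(kπi) = E(−kπi) = 0; 0 is a fixed point of E with E′(0) = kπ and |E′(0)| > 1; consequently each critical value w of E is strictly preperiodic: E^{∘(1+n)}(w) = E^{∘1}(w) for all n ≥ 1, while E^{∘m}(w) ≠ w for all m ≥ 1. Hence E is postsingularly preperiodic. -/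
open Filter Topology Set MeasureTheory

noncomputable section

/-- The cosine-type map `E(z) = a e^z + b e^{-z}`. -/
def E (a b : ℂ) (z : ℂ) : ℂ := a * Complex.exp z + b * Complex.exp (-z)

/-- `z` escapes to infinity under iteration of `E a b`. -/
def Escapes (a b : ℂ) (z : ℂ) : Prop :=
  Tendsto (fun k => ‖(E a b)^[k] z‖) atTop atTop

/-- `F(t) = e^t - 1`. -/
def FF (t : ℝ) : ℝ := Real.exp t - 1

/-- External addresses: entry `n` is `s_{n+1}`, an integer together with a label
(`true` = `R`, `false` = `L`). -/
abbrev Address := ℕ → ℤ × Bool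

/-- The left shift on external addresses. -/
def shift (s : Address) : Address := fun n => s (n + 1)

/-- The minimal potential `t_s` (infimum of admissible potentials; the set is
nonempty for exponentially bounded addresses). -/
def tmin (s : Address) : ℝ :=
  sInf {t : ℝ | 0 < t ∧
    Tendsto (fun k : ℕ => (|(s k).1| : ℝ) / FF^[k + 1] t) atTop (nhds 0)}

/-- An address is exponentially bounded if `|s_k| ≤ F^{∘(k-1)}(x)` for some `x > 0`. -/
def ExpBounded (s : Address) : Prop :=
  ∃ x > 0, ∀ k : ℕ, (|(s k).1| : ℝ) ≤ FF^[k] x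

/-- A dynamic ray family for `E a b`. -/
structure RayFamily (a b : ℂ) where
  α : ℂ
  β : ℂ
  g : Address → ℝ → ℂ
  injOn : ∀ s : Address, ExpBounded s → Set.InjOn (g s) (Set.Ioi (tmin s))
  contOn : ∀ s : Address, ExpBounded s → ContinuousOn (g s) (Set.Ioi (tmin s))
  asympR : ∀ s : Address, ExpBounded s → (s 0).2 = true →
    Tendsto (fun t : ℝ => g s t - ((t : ℂ) - α + 2 * (Real.pi : ℂ) * Complex.I * ((s 0).1 : ℂ)))
      atTop (nhds 0)
  asympL : ∀ s : Address, ExpBounded s → (s 0).2 = false →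
    Tendsto (fun t : ℝ => g s t - (-(t : ℂ) + β + 2 * (Real.pi : ℂ) * Complex.I * ((s 0).1 : ℂ)))
      atTop (nhds 0)
  conj : ∀ s : Address, ExpBounded s → ∀ t : ℝ, tmin s < t →
    E a b (g s t) = g (shift s) (FF t)
  mem_escaping : ∀ s : Address, ExpBounded s → ∀ t : ℝ, tmin s < t → Escapes a b (g s t)

/-- The union of all dynamic rays. -/
def RaySet (a b : ℂ) (rf : RayFamily a b) : Set ℂ :=
  {z : ℂ | ∃ s : Address, ExpBounded s ∧ ∃ t : ℝ, tmin s < t ∧ z = rf.g s t}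

/-- The ray `g_s` lands at `z`. -/
def Lands (a b : ℂ) (rf : RayFamily a b) (s : Address) (z : ℂ) : Prop :=
  Tendsto (rf.g s) (nhdsWithin (tmin s) (Set.Ioi (tmin s))) (nhds z)

/-- `E a b` is postsingularly preperiodic: both critical values are strictly preperiodic. -/
def PostsingularlyPreperiodic (a b : ℂ) : Prop :=
  ∀ w : ℂ, w ^ 2 = 4 * a * b →
    (∃ k ≥ 1, ∃ n ≥ 1, (E a b)^[k + n] w = (E a b)^[k] w) ∧
    (∀ m ≥ 1, (E a b)^[m] w ≠ w)

lemma E_deriv (a b : ℂ) (z : ℂ) :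
    deriv (E a b) z = a * Complex.exp z - b * Complex.exp (-z) := by
  have h1 : HasDerivAt (fun z : ℂ => Complex.exp (-z)) (-Complex.exp (-z)) z := by
    have h2 := (Complex.hasDerivAt_exp (-z)).comp z (hasDerivAt_neg z)
    rw [mul_neg_one] at h2
    exact h2
  have h : HasDerivAt (E a b) (a * Complex.exp z + b * -Complex.exp (-z)) z :=
    ((Complex.hasDerivAt_exp z).const_mul a).add (h1.const_mul b)
  rw [h.deriv]; ring

/-- `E(z) = kπ sinh z` is postsingularly preperiodic. -/
theorem sinh_map_postsingularly_preperiodic (k : ℤ) (hk : k ≠ 0) (a b : ℂ)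
    (ha : a = (k : ℂ) * (Real.pi : ℂ) / 2) (hb : b = -((k : ℂ) * (Real.pi : ℂ)) / 2) :
    (E a b) '' {z : ℂ | deriv (E a b) z = 0} =
      {(k : ℂ) * (Real.pi : ℂ) * Complex.I, -((k : ℂ) * (Real.pi : ℂ) * Complex.I)} ∧
    E a b ((k : ℂ) * (Real.pi : ℂ) * Complex.I) = 0 ∧
    E a b (-((k : ℂ) * (Real.pi : ℂ) * Complex.I)) = 0 ∧
    E a b 0 = 0 ∧
    deriv (E a b) 0 = (k : ℂ) * (Real.pi : ℂ) ∧
    1 < ‖deriv (E a b) 0‖ ∧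
    (∀ w : ℂ, w ^ 2 = 4 * a * b →
      (∀ n ≥ 1, (E a b)^[1 + n] w = (E a b)^[1] w) ∧ (∀ m ≥ 1, (E a b)^[m] w ≠ w)) ∧
    PostsingularlyPreperiodic a b := by
  set c : ℂ := (k : ℂ) * (Real.pi : ℂ) with hc
  have hc0 : c ≠ 0 :=
    mul_ne_zero (Int.cast_ne_zero.mpr hk) (Complex.ofReal_ne_zero.mpr Real.pi_ne_zero)
  have hE : ∀ z, E a b z = c * Complex.sinh z := by
    intro z; simp only [E, ha, hb, Complex.sinh, hc]; ring
  have hD : ∀ z, deriv (E a b) z = c * Complex.cosh z := by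
    intro z; rw [E_deriv, ha, hb, Complex.cosh, hc]; ring
  -- E vanishes at ±cI
  have hvp : E a b (c * Complex.I) = 0 := by
    rw [hE, Complex.sinh_mul_I, hc, Complex.sin_int_mul_pi]
    ring
  have hvm : E a b (-(c * Complex.I)) = 0 := by
    rw [hE, Complex.sinh_neg, Complex.sinh_mul_I, hc, Complex.sin_int_mul_pi]
    ring
  have h0 : E a b 0 = 0 := by rw [hE, Complex.sinh_zero, mul_zero]
  have hd0 : deriv (E a b) 0 = c := by rw [hD, Complex.cosh_zero, mul_one]
  have habs : 1 < ‖deriv (E a b) 0‖ := by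
    rw [hd0, hc, norm_mul, Complex.norm_intCast, Complex.norm_real, Real.norm_eq_abs,
      abs_of_pos Real.pi_pos]
    have h1 : (1 : ℝ) ≤ |(k : ℝ)| := by
      rw [← Int.cast_abs]
      exact_mod_cast Int.one_le_abs hk
    calc (1 : ℝ) < Real.pi := by linarith [Real.pi_gt_three]
      _ = 1 * Real.pi := (one_mul _).symm
      _ ≤ |(k : ℝ)| * Real.pi := by
        exact mul_le_mul_of_nonneg_right h1 Real.pi_pos.le
  -- image of critical set
  have himage : (E a b) '' {z : ℂ | deriv (E a b) z = 0} =
      {c * Complex.I, -(c * Complex.I)} := by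
    ext w
    simp only [Set.mem_image, Set.mem_setOf_eq, Set.mem_insert_iff,
      Set.mem_singleton_iff]
    constructor
    · rintro ⟨z, hz, rfl⟩
      rw [hD] at hz
      have hcosh : Complex.cosh z = 0 := by
        rcases mul_eq_zero.mp hz with h | h
        · exact absurd h hc0
        · exact h
      have hsq : Complex.sinh z ^ 2 = -1 := by
        have := Complex.cosh_sq_sub_sinh_sq z
        rw [hcosh] at this
        linear_combination -this
      have : (E a b z - c * Complex.I) * (E a b z + c * Complex.I) = 0 := by
        rw [hE]
        have : (c * Complex.sinh z) ^ 2 = (c * Complex.I) ^ 2 := by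
          linear_combination c ^ 2 * hsq - c ^ 2 * Complex.I_sq
        linear_combination this
      rcases mul_eq_zero.mp this with h | h
      · left; linear_combination h
      · right; linear_combination h
    · rintro (rfl | rfl)
      · refine ⟨(Real.pi : ℂ) / 2 * Complex.I, ?_, ?_⟩
        · show deriv (E a b) _ = 0
          rw [hD, Complex.cosh_mul_I, Complex.cos_pi_div_two, mul_zero]
        · rw [hE, Complex.sinh_mul_I, Complex.sin_pi_div_two, one_mul]
      · refine ⟨-((Real.pi : ℂ) / 2 * Complex.I), ?_, ?_⟩
        · show deriv (E a b) _ = 0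
          rw [hD, Complex.cosh_neg, Complex.cosh_mul_I,
            Complex.cos_pi_div_two, mul_zero]
        · rw [hE, Complex.sinh_neg, Complex.sinh_mul_I, Complex.sin_pi_div_two,
            one_mul, mul_neg]
  -- strict preperiodicity of critical values
  have hcrit : ∀ w : ℂ, w ^ 2 = 4 * a * b →
      (∀ n ≥ 1, (E a b)^[1 + n] w = (E a b)^[1] w) ∧
      (∀ m ≥ 1, (E a b)^[m] w ≠ w) := by
    intro w hw
    have hw2 : w ^ 2 = (c * Complex.I) ^ 2 := by
      rw [hw, ha, hb, mul_pow, Complex.I_sq, hc]; ring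
    have hcases : w = c * Complex.I ∨ w = -(c * Complex.I) := by
      have : (w - c * Complex.I) * (w + c * Complex.I) = 0 := by
        linear_combination hw2
      rcases mul_eq_zero.mp this with h | h
      · left; linear_combination h
      · right; linear_combination h
    have hw0 : E a b w = 0 := by
      rcases hcases with rfl | rfl
      · exact hvp
      · exact hvm
    have hiter : ∀ n : ℕ, (E a b)^[n] (0 : ℂ) = 0 := fun n =>
      Function.iterate_fixed h0 n
    have hwne : w ≠ 0 := by
      intro h
      exact (pow_ne_zero 2 (mul_ne_zero hc0 Complex.I_ne_zero))
        (by rw [← hw2, h]; ring)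
    constructor
    · intro n _
      rw [add_comm, Function.iterate_add_apply, Function.iterate_one, hw0, hiter]
    · intro m hm h
      obtain ⟨m', rfl⟩ : ∃ m', m = m' + 1 := ⟨m - 1, (Nat.succ_pred_eq_of_pos hm).symm⟩
      rw [Function.iterate_add_apply, Function.iterate_one, hw0, hiter] at h
      exact hwne h.symm
  refine ⟨himage, hvp, hvm, h0, hd0, habs, hcrit, ?_⟩
  intro w hw
  obtain ⟨h1, h2⟩ := hcrit w hw
  exact ⟨⟨1, le_refl 1, 1, le_refl 1, h1 1 le_rfl⟩, h2⟩
end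
end

section
/- Let F : [0,∞) → [0,∞), F(t) = e^t − 1, and let (s_k)_{k≥1} be a sequence of integers. Then inf{t > 0 : lim_{k→∞} |s_k| / F^{∘k}(t) = 0} < ∞ if and only if there exists x > 0 such that |s_k| ≤ F^{∘(k−1)}(x) for all k ≥ 1 (where F^{∘0}(x) = x). -/
open Filter Topology Set MeasureTheory

noncomputable section

lemma FF_mono : Monotone FF := fun u v h => by
  simpa [FF] using Real.exp_le_exp.2 h

lemma le_FF (t : ℝ) : t ≤ FF t := by
  have := Real.add_one_le_exp t
  simp only [FF]; linarith

lemma le_FF_iter (k : ℕ) (t : ℝ) : t ≤ FF^[k] t := by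
  induction k with
  | zero => simp
  | succ n ih =>
    rw [Function.iterate_succ_apply']
    exact ih.trans (le_FF _)

lemma gap_lemma (x y : ℝ) (hx : 0 ≤ x) (hxy : x + 1 ≤ y) (k : ℕ) :
    FF^[k] x + (1 + k / 2) ≤ FF^[k] y := by
  induction k with
  | zero => simpa using by linarith
  | succ m ih =>
    rw [Function.iterate_succ_apply', Function.iterate_succ_apply']
    set a := FF^[m] x with ha
    set b := FF^[m] y with hb
    have ha0 : 0 ≤ a := hx.trans (le_FF_iter m x)
    set g := b - a with hg
    have hg1 : 1 + m / 2 ≤ g := by simp only [hg]; linarith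
    have hgge1 : (1:ℝ) ≤ g := by push_cast at hg1 ⊢; nlinarith [Nat.cast_nonneg (α := ℝ) m]
    have h1 : g ≤ Real.exp (g - 1) := by linarith [Real.add_one_le_exp (g - 1)]
    have h2 : Real.exp g = Real.exp (g - 1) * Real.exp 1 := by
      rw [← Real.exp_add]; ring_nf
    have he : (2.7 : ℝ) < Real.exp 1 := by
      have := Real.exp_one_gt_d9; linarith
    have h3 : g + 1 / 2 ≤ Real.exp g - 1 := by nlinarith
    have h4 : Real.exp b = Real.exp a * Real.exp g := by
      rw [← Real.exp_add, hg]; ring_nf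
    have h5 : (1:ℝ) ≤ Real.exp a := Real.one_le_exp ha0
    simp only [FF]
    push_cast
    nlinarith [Real.exp_pos a, Real.exp_pos g]

lemma main_ineq (x y : ℝ) (hx : 0 ≤ x) (hxy : x + 1 ≤ y) (m : ℕ) :
    Real.exp ((m + 1) / 2) * FF^[m + 1] x ≤ FF^[m + 1] y := by
  rw [Function.iterate_succ_apply', Function.iterate_succ_apply']
  set a := FF^[m] x with ha
  set b := FF^[m] y with hb
  have ha0 : 0 ≤ a := hx.trans (le_FF_iter m x)
  have hgap : a + (1 + m / 2) ≤ b := gap_lemma x y hx hxy m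
  have h1 : Real.exp (a + (1 + m / 2)) ≤ Real.exp b := Real.exp_le_exp.2 hgap
  have h2 : Real.exp (a + (1 + m / 2)) = Real.exp a * (Real.exp (1/2) * Real.exp (((m:ℝ)+1)/2)) := by
    rw [← Real.exp_add, ← Real.exp_add]; ring_nf
  have h3 : (1:ℝ) ≤ Real.exp a := Real.one_le_exp ha0
  have h4 : (1:ℝ) ≤ Real.exp (1/2) := Real.one_le_exp (by norm_num)
  have h5 : (1:ℝ) ≤ Real.exp (((m:ℝ)+1)/2) := Real.one_le_exp (by positivity)
  simp only [FF]
  push_cast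
  have h6 : 0 ≤ Real.exp (((m:ℝ)+1)/2) * Real.exp a * (Real.exp (1/2) - 1) :=
    mul_nonneg (mul_nonneg (Real.exp_pos _).le (Real.exp_pos _).le) (by linarith)
  nlinarith [h6]

/-- `t_s < ∞` if and only if the sequence is exponentially bounded.
Here `s k` denotes `s_{k+1}`, so the term `|s_k| / F^{∘k}(t)` (for `k ≥ 1`) is
`|s k| / F^[k+1] t`, and the bound `|s_k| ≤ F^{∘(k-1)}(x)` is `|s k| ≤ F^[k] x`. -/
theorem tmin_finite_iff_exponentially_bounded (s : ℕ → ℤ) :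
    sInf ((fun t : ℝ => (t : EReal)) ''
        {t : ℝ | 0 < t ∧
          Tendsto (fun k : ℕ => (|s k| : ℝ) / FF^[k + 1] t) atTop (nhds 0)}) < (⊤ : EReal) ↔
    ∃ x > 0, ∀ k : ℕ, (|s k| : ℝ) ≤ FF^[k] x := by
  constructor
  · intro h
    rcases Set.eq_empty_or_nonempty {t : ℝ | 0 < t ∧
        Tendsto (fun k : ℕ => (|s k| : ℝ) / FF^[k + 1] t) atTop (nhds 0)} with he | ⟨t, ht, htend⟩
    · rw [he] at h
      simp only [Set.image_empty, sInf_empty, lt_self_iff_false] at h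
    · have hpos : ∀ k : ℕ, 0 < FF^[k + 1] t := fun k => lt_of_lt_of_le ht (le_FF_iter _ t)
      have hev : ∀ᶠ k : ℕ in atTop, (|s k| : ℝ) / FF^[k + 1] t < 1 :=
        htend.eventually (gt_mem_nhds one_pos)
      rw [eventually_atTop] at hev
      obtain ⟨N, hN⟩ := hev
      set M : ℝ := ∑ j ∈ Finset.range N, (|s j| : ℝ) with hM
      have hMnn : 0 ≤ M := Finset.sum_nonneg fun j _ => by positivity
      have hFFt : 0 < FF t := lt_of_lt_of_le ht (le_FF t)
      refine ⟨FF t + 1 + M, by linarith, fun k => ?_⟩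
      rcases lt_or_ge k N with hk | hk
      · have h1 : (|s k| : ℝ) ≤ M :=
          Finset.single_le_sum (f := fun j => (|s j| : ℝ)) (fun j _ => by positivity)
            (Finset.mem_range.2 hk)
        calc (|s k| : ℝ) ≤ FF t + 1 + M := by linarith
          _ ≤ FF^[k] (FF t + 1 + M) := le_FF_iter k _
      · have h1 : (|s k| : ℝ) ≤ FF^[k + 1] t := ((div_lt_one (hpos k)).mp (hN k hk)).le
        calc (|s k| : ℝ) ≤ FF^[k + 1] t := h1
          _ = FF^[k] (FF t) := Function.iterate_succ_apply FF k t
          _ ≤ FF^[k] (FF t + 1 + M) := (FF_mono.iterate k) (by linarith)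
  · rintro ⟨x, hx, hbound⟩
    set t : ℝ := x + 2 with htdef
    set y : ℝ := FF t with hydef
    have hy : x + 1 ≤ y := by
      have := le_FF t
      simp only [hydef]; linarith
    have hypos : 0 < y := by linarith
    have htmem : t ∈ {t : ℝ | 0 < t ∧
        Tendsto (fun k : ℕ => (|s k| : ℝ) / FF^[k + 1] t) atTop (nhds 0)} := by
      refine ⟨by linarith, ?_⟩
      have hpos : ∀ k : ℕ, 0 < FF^[k + 1] t := fun k =>
        lt_of_lt_of_le (by linarith : (0:ℝ) < t) (le_FF_iter _ t)
      refine squeeze_zero' (g := fun k : ℕ => Real.exp (-(1/2) : ℝ) ^ k)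
        (Filter.Eventually.of_forall fun k => ?_)
        ?_ (tendsto_pow_atTop_nhds_zero_of_lt_one (Real.exp_nonneg _) ?_)
      · exact div_nonneg (by positivity) (hpos k).le
      · rw [eventually_atTop]
        refine ⟨1, fun k hk => ?_⟩
        obtain ⟨m, rfl⟩ : ∃ m, k = m + 1 := ⟨k - 1, by omega⟩
        have hiter : FF^[m + 1 + 1] t = FF^[m + 1] y := by
          rw [Function.iterate_succ_apply]
        have hmain : Real.exp (((m:ℝ) + 1) / 2) * FF^[m + 1] x ≤ FF^[m + 1] y :=
          main_ineq x y hx.le hy m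
        have hb : (|s (m + 1)| : ℝ) ≤ FF^[m + 1] x := hbound (m + 1)
        have hxpos : 0 < FF^[m + 1] x := lt_of_lt_of_le hx (le_FF_iter _ x)
        have hypos' : 0 < FF^[m + 1] y := lt_of_lt_of_le hypos (le_FF_iter _ y)
        have hexp : Real.exp (-(1/2) : ℝ) ^ (m + 1) = Real.exp (-(((m:ℝ) + 1) / 2)) := by
          rw [← Real.exp_nat_mul]
          congr 1
          push_cast
          ring
        show (|s (m + 1)| : ℝ) / FF^[m + 1 + 1] t ≤ Real.exp (-(1/2) : ℝ) ^ (m + 1)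
        rw [hiter, hexp, div_le_iff₀ hypos']
        have hepos : 0 < Real.exp (-(((m:ℝ) + 1) / 2)) := Real.exp_pos _
        have : Real.exp (-(((m:ℝ) + 1) / 2)) * (Real.exp (((m:ℝ) + 1) / 2) * FF^[m + 1] x)
            ≤ Real.exp (-(((m:ℝ) + 1) / 2)) * FF^[m + 1] y :=
          mul_le_mul_of_nonneg_left hmain hepos.le
        rw [← mul_assoc, ← Real.exp_add, neg_add_cancel, Real.exp_zero, one_mul] at this
        linarith
      · calc Real.exp (-(1/2) : ℝ) < Real.exp 0 := Real.exp_lt_exp.2 (by norm_num)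
          _ = 1 := Real.exp_zero
    calc sInf ((fun t : ℝ => (t : EReal)) '' {t : ℝ | 0 < t ∧
          Tendsto (fun k : ℕ => (|s k| : ℝ) / FF^[k + 1] t) atTop (nhds 0)})
        ≤ (t : EReal) := sInf_le (Set.mem_image_of_mem _ htmem)
      _ < (⊤ : EReal) := EReal.coe_lt_top t
end
end

section
/- Let a, b ∈ ℂ with ab ≠ 0 and E(z) = a·e^z + b·e^{−z}. Let U′ ⊂ ℂ be open, simply connected, and containing no critical value of E (no w with w² = 4ab). Then for every connected component W of E^{−1}(U′), the restriction of E to W is a bijection (in fact a conformal isomorphism) from W onto U′. -/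
open Filter Topology Set MeasureTheory

noncomputable section

namespace CovAux

/-- Local sections over preconnected open base pieces. -/
def Sec (p : ℂ → ℂ) (U : Set ℂ) : Prop :=
  ∀ w ∈ U, ∃ V : Set ℂ, IsOpen V ∧ IsPreconnected V ∧ w ∈ V ∧ V ⊆ U ∧
    ∀ z : ℂ, p z ∈ V → ∃ s : ℂ → ℂ, ContinuousOn s V ∧ (∀ v ∈ V, p (s v) = v) ∧ s (p z) = z

/-- Local injectivity of `p` at points over `U`. -/
def LocInj (p : ℂ → ℂ) (U : Set ℂ) : Prop :=
  ∀ z : ℂ, p z ∈ U → ∃ N ∈ 𝓝 z, Set.InjOn p N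

/-- Uniqueness of lifts through a locally injective map. -/
theorem lift_unique {p : ℂ → ℂ} {U : Set ℂ} (hinj : LocInj p U)
    {X : Type} [TopologicalSpace X] {A : Set X} (hA : IsPreconnected A)
    {g₁ g₂ : X → ℂ} (h₁ : ContinuousOn g₁ A) (h₂ : ContinuousOn g₂ A)
    (hU : ∀ x ∈ A, p (g₁ x) ∈ U)
    (heq : ∀ x ∈ A, p (g₁ x) = p (g₂ x))
    {x₀ : X} (hx₀ : x₀ ∈ A) (h0 : g₁ x₀ = g₂ x₀) : ∀ x ∈ A, g₁ x = g₂ x := by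
  haveI : PreconnectedSpace A := isPreconnected_iff_preconnectedSpace.mp hA
  have hc₁ : Continuous (A.restrict g₁) := h₁.restrict
  have hc₂ : Continuous (A.restrict g₂) := h₂.restrict
  set S : Set A := {x : A | g₁ (x : X) = g₂ (x : X)} with hS
  have hSclosed : IsClosed S := isClosed_eq hc₁ hc₂
  have hSopen : IsOpen S := by
    rw [isOpen_iff_mem_nhds]
    intro x hx
    obtain ⟨N, hN, hNinj⟩ := hinj (g₁ (x : X)) (hU _ x.2)
    have hgx : g₁ (x : X) ∈ interior N := mem_interior_iff_mem_nhds.mpr hN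
    have hO : IsOpen ((A.restrict g₁) ⁻¹' interior N ∩ (A.restrict g₂) ⁻¹' interior N) :=
      (isOpen_interior.preimage hc₁).inter (isOpen_interior.preimage hc₂)
    have hx' : g₁ (x : X) = g₂ (x : X) := hx
    refine mem_of_superset (hO.mem_nhds ⟨hgx, ?_⟩) ?_
    · show g₂ (x : X) ∈ interior N
      rw [← hx']; exact hgx
    · rintro y ⟨hy₁, hy₂⟩
      exact hNinj (interior_subset hy₁) (interior_subset hy₂) (heq _ y.2)
  have hne : S.Nonempty := ⟨⟨x₀, hx₀⟩, h0⟩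
  have : S = Set.univ := (IsClopen.eq_univ ⟨hSclosed, hSopen⟩ hne)
  intro x hx
  have : (⟨x, hx⟩ : A) ∈ S := this ▸ Set.mem_univ _
  exact this


/-- Existence of path lifts. -/
theorem lift_exists {p : ℂ → ℂ} {U : Set ℂ} (hsec : Sec p U)
    {γ : ℝ → ℂ} (hγ : Continuous γ) (hmaps : ∀ t ∈ Icc (0:ℝ) 1, γ t ∈ U)
    {z₀ : ℂ} (hz₀ : p z₀ = γ 0) :
    ∃ g : ℝ → ℂ, ContinuousOn g (Icc 0 1) ∧ g 0 = z₀ ∧ ∀ t ∈ Icc (0:ℝ) 1, p (g t) = γ t := by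
  choose! V hVo hVpre hVmem hVsub hVs using hsec
  have hcov : Icc (0:ℝ) 1 ⊆ ⋃ w : U, γ ⁻¹' V w :=
    fun t ht => Set.mem_iUnion.mpr ⟨⟨γ t, hmaps t ht⟩, hVmem _ (hmaps t ht)⟩
  obtain ⟨δ, hδ, hball⟩ := lebesgue_number_lemma_of_metric isCompact_Icc
    (fun w : U => (hVo w w.2).preimage hγ) hcov
  obtain ⟨N, hN⟩ := exists_nat_one_div_lt hδ
  set n : ℕ := N + 1 with hn
  have hnpos : (0:ℝ) < n := by positivity
  have h1n : (1:ℝ)/n < δ := by rw [hn]; push_cast; exact hN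
  have key : ∀ i : ℕ, i ≤ n → ∃ g : ℝ → ℂ, ContinuousOn g (Icc 0 ((i:ℝ)/n)) ∧ g 0 = z₀ ∧
      ∀ t ∈ Icc (0:ℝ) ((i:ℝ)/n), p (g t) = γ t := by
    intro i hi
    induction i with
    | zero =>
      refine ⟨fun _ => z₀, continuousOn_const, rfl, ?_⟩
      intro t ht
      simp only [Nat.cast_zero, zero_div, Icc_self, mem_singleton_iff] at ht
      rw [ht]; exact hz₀
    | succ i ih =>
      obtain ⟨g, hgc, hg0, hglift⟩ := ih (le_of_lt (Nat.lt_of_succ_le hi))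
      set ti : ℝ := (i:ℝ)/n with hti
      set ti1 : ℝ := ((i+1:ℕ):ℝ)/n with hti1
      have htile : ti ≤ ti1 := by
        rw [hti, hti1]
        gcongr <;> first | positivity | (push_cast; linarith)
      have hti0 : 0 ≤ ti := by positivity
      have hti11 : ti1 ≤ 1 := by
        rw [hti1, div_le_one hnpos]; exact_mod_cast hi
      have htimem : ti ∈ Icc (0:ℝ) 1 := ⟨hti0, le_trans htile hti11⟩
      obtain ⟨w, hw⟩ := hball ti htimem
      have hseg : ∀ t ∈ Icc ti ti1, γ t ∈ V w := by
        intro t ht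
        apply hw
        rw [Metric.mem_ball, Real.dist_eq, abs_of_nonneg (by linarith [ht.1])]
        have : t - ti ≤ 1/n := by
          have : ti1 - ti = 1/n := by rw [hti1, hti]; push_cast; ring
          linarith [ht.2]
        linarith
      have htiself : ti ∈ Icc (0:ℝ) ti := ⟨hti0, le_refl _⟩
      have hpzi : p (g ti) ∈ V w := by
        rw [hglift ti htiself]
        exact hseg ti ⟨le_refl _, htile⟩
      obtain ⟨s, hscont, hsproj, hsz⟩ := hVs w w.2 (g ti) hpzi
      refine ⟨fun t => if t ≤ ti then g t else s (γ t), ?_, ?_, ?_⟩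
      · apply ContinuousOn.if
        · intro a ha
          have hfr : a = ti := by
            have := ha.2
            rw [show {a : ℝ | a ≤ ti} = Iic ti from rfl, frontier_Iic] at this
            exact this
          show g a = s (γ a)
          rw [hfr, ← hglift ti htiself]
          exact hsz.symm
        · apply hgc.mono
          intro t ht
          rcases ht with ⟨ht1, ht2⟩
          rw [show {a : ℝ | a ≤ ti} = Iic ti from rfl, closure_Iic] at ht2
          exact ⟨ht1.1, ht2⟩
        · have : Icc (0:ℝ) ti1 ∩ closure {a : ℝ | ¬ a ≤ ti} ⊆ Icc ti ti1 := by
            intro t ht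
            rcases ht with ⟨ht1, ht2⟩
            rw [show {a : ℝ | ¬ a ≤ ti} = Ioi ti by ext x; simp [not_le], closure_Ioi] at ht2
            exact ⟨ht2, ht1.2⟩
          exact (hscont.comp hγ.continuousOn (fun t ht => hseg t (this ht))).mono (fun x hx => hx)
      · simp only [if_pos hti0]; exact hg0
      · intro t ht
        by_cases h : t ≤ ti
        · simp only [if_pos h]; exact hglift t ⟨ht.1, h⟩
        · simp only [if_neg h]
          exact hsproj (γ t) (hseg t ⟨le_of_not_ge h, ht.2⟩)
  obtain ⟨g, hgc, hg0, hglift⟩ := key n (le_refl n)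
  have : (n:ℝ)/n = 1 := div_self (ne_of_gt hnpos)
  rw [this] at hgc hglift
  exact ⟨g, hgc, hg0, hglift⟩


/-- Monodromy: under a fixed-endpoints homotopy, endpoints of lifts are constant. -/
theorem monodromy {p : ℂ → ℂ} {U : Set ℂ} (hinj : LocInj p U) (hsec : Sec p U)
    {H : ℝ × ℝ → ℂ} (hH : Continuous H)
    (hmaps : ∀ q ∈ (Icc (0:ℝ) 1) ×ˢ (Icc (0:ℝ) 1), H q ∈ U)
    (htop : ∀ s ∈ Icc (0:ℝ) 1, H (s, 1) = H (0, 1))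
    {z₁ : ℂ} (hbot : ∀ s ∈ Icc (0:ℝ) 1, H (s, 0) = p z₁)
    {g : ℝ → ℝ → ℂ}
    (hgc : ∀ s ∈ Icc (0:ℝ) 1, ContinuousOn (g s) (Icc 0 1))
    (hg0 : ∀ s ∈ Icc (0:ℝ) 1, g s 0 = z₁)
    (hglift : ∀ s ∈ Icc (0:ℝ) 1, ∀ t ∈ Icc (0:ℝ) 1, p (g s t) = H (s, t)) :
    ∀ s ∈ Icc (0:ℝ) 1, g s 1 = g 0 1 := by
  choose! V hVo hVpre hVmem hVsub hVs using hsec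
  -- local constancy of `s ↦ g s 1`
  have LC : ∀ s₀ ∈ Icc (0:ℝ) 1, ∃ ε > 0, ∀ s ∈ Metric.ball s₀ ε ∩ Icc 0 1, g s 1 = g s₀ 1 := by
    intro s₀ hs₀
    have hQ : IsCompact ((Icc (0:ℝ) 1) ×ˢ (Icc (0:ℝ) 1)) := isCompact_Icc.prod isCompact_Icc
    have hcov : (Icc (0:ℝ) 1) ×ˢ (Icc (0:ℝ) 1) ⊆ ⋃ w : U, H ⁻¹' V w :=
      fun q hq => Set.mem_iUnion.mpr ⟨⟨H q, hmaps q hq⟩, hVmem _ (hmaps q hq)⟩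
    obtain ⟨δ, hδ, hball⟩ := lebesgue_number_lemma_of_metric hQ
      (fun w : U => (hVo w w.2).preimage hH) hcov
    obtain ⟨N, hN⟩ := exists_nat_one_div_lt (half_pos hδ)
    set n : ℕ := N + 1 with hn
    have hnpos : (0:ℝ) < n := by positivity
    have h1n : (1:ℝ)/n < δ/2 := by rw [hn]; push_cast; exact hN
    set A : Set ℝ := Metric.ball s₀ (δ/2) ∩ Icc 0 1 with hA
    have hApre : IsPreconnected A := ((convex_ball s₀ (δ/2)).inter (convex_Icc 0 1)).isPreconnected
    have hs₀A : s₀ ∈ A := ⟨Metric.mem_ball_self (half_pos hδ), hs₀⟩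
    have hAsub : A ⊆ Icc 0 1 := fun x hx => hx.2
    have key : ∀ i : ℕ, i ≤ n → ∃ (τ : ℂ → ℂ) (W : Set ℂ), ContinuousOn τ W ∧
        (∀ v ∈ W, p (τ v) = v) ∧
        ∀ s ∈ A, H (s, (i:ℝ)/n) ∈ W ∧ g s ((i:ℝ)/n) = τ (H (s, (i:ℝ)/n)) := by
      intro i hi
      induction i with
      | zero =>
        have hpz : p z₁ ∈ U := by
          rw [← hbot s₀ hs₀]
          exact hmaps _ ⟨hs₀, ⟨le_refl 0, zero_le_one⟩⟩
        have hpzV : p z₁ ∈ V (p z₁) := hVmem _ hpz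
        obtain ⟨τ, hτc, hτs, hτz⟩ := hVs (p z₁) hpz z₁ hpzV
        refine ⟨τ, V (p z₁), hτc, hτs, ?_⟩
        intro s hs
        have h0 : H (s, ((0:ℕ):ℝ)/n) = p z₁ := by
          simpa using hbot s (hAsub hs)
        refine ⟨by rw [h0]; exact hpzV, ?_⟩
        rw [h0, hτz]
        simpa using hg0 s (hAsub hs)
      | succ i ih =>
        obtain ⟨τ, W, hτc, hτs, hIH⟩ := ih (le_of_lt (Nat.lt_of_succ_le hi))
        set ti : ℝ := (i:ℝ)/n with hti
        set ti1 : ℝ := ((i+1:ℕ):ℝ)/n with hti1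
        have htile : ti ≤ ti1 := by
          rw [hti, hti1]; gcongr <;> first | positivity | (push_cast; linarith)
        have hti0 : 0 ≤ ti := by positivity
        have hti11 : ti1 ≤ 1 := by rw [hti1, div_le_one hnpos]; exact_mod_cast hi
        have htimem : ti ∈ Icc (0:ℝ) 1 := ⟨hti0, le_trans htile hti11⟩
        have hqQ : (s₀, ti) ∈ (Icc (0:ℝ) 1) ×ˢ (Icc (0:ℝ) 1) := ⟨hs₀, htimem⟩
        obtain ⟨w, hw⟩ := hball (s₀, ti) hqQ
        have hrect : ∀ s ∈ A, ∀ t ∈ Icc ti ti1, H (s, t) ∈ V w := by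
          intro s hs t ht
          apply hw
          rw [Metric.mem_ball, Prod.dist_eq]
          apply max_lt
          · exact lt_trans (by simpa [Real.dist_eq] using hs.1) (half_lt_self hδ)
          · rw [Real.dist_eq, abs_of_nonneg (by linarith [ht.1])]
            have hd : ti1 - ti = 1/n := by rw [hti1, hti]; push_cast; ring
            have : t - ti ≤ 1/n := by linarith [ht.2]
            linarith [half_lt_self hδ]
        have hmemti : ∀ s ∈ A, (s, ti) ∈ (Icc (0:ℝ) 1) ×ˢ (Icc (0:ℝ) 1) :=
          fun s hs => ⟨hAsub hs, htimem⟩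
        have hpzi : p (g s₀ ti) ∈ V w := by
          rw [hglift s₀ hs₀ ti htimem]
          exact hrect s₀ hs₀A ti ⟨le_refl _, htile⟩
        obtain ⟨σ, hσc, hσs, hσz⟩ := hVs w w.2 (g s₀ ti) hpzi
        -- horizontal uniqueness at height ti
        have hhor : ∀ s ∈ A, τ (H (s, ti)) = σ (H (s, ti)) := by
          have hcH : Continuous fun s : ℝ => H (s, ti) :=
            hH.comp (continuous_id.prodMk continuous_const)
          refine lift_unique hinj hApre (g₁ := fun s => τ (H (s, ti)))
            (g₂ := fun s => σ (H (s, ti)))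
            (hτc.comp hcH.continuousOn (fun s hs => (hIH s hs).1))
            (hσc.comp hcH.continuousOn (fun s hs => hrect s hs ti ⟨le_refl _, htile⟩))
            ?_ ?_ hs₀A ?_
          · intro x hx
            show p (τ (H (x, ti))) ∈ U
            rw [hτs _ (hIH x hx).1]
            exact hmaps _ (hmemti x hx)
          · intro x hx
            show p (τ (H (x, ti))) = p (σ (H (x, ti)))
            rw [hτs _ (hIH x hx).1, hσs _ (hrect x hx ti ⟨le_refl _, htile⟩)]
          · show τ (H (s₀, ti)) = σ (H (s₀, ti))
            rw [← (hIH s₀ hs₀A).2, ← hσz, ← hglift s₀ hs₀ ti htimem]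
        refine ⟨σ, V w, hσc, hσs, ?_⟩
        intro s hs
        have hsI : s ∈ Icc (0:ℝ) 1 := hAsub hs
        have hvert : ∀ t ∈ Icc ti ti1, g s t = σ (H (s, t)) := by
          have hcH : Continuous fun t : ℝ => H (s, t) :=
            hH.comp (continuous_const.prodMk continuous_id)
          refine lift_unique hinj isPreconnected_Icc (g₁ := g s)
            (g₂ := fun t => σ (H (s, t)))
            ((hgc s hsI).mono (Icc_subset_Icc hti0 hti11))
            (hσc.comp hcH.continuousOn (fun t ht => hrect s hs t ht))
            ?_ ?_ ⟨le_refl ti, htile⟩ ?_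
          · intro t ht
            rw [hglift s hsI t (Icc_subset_Icc hti0 hti11 ht)]
            exact hmaps _ ⟨hsI, Icc_subset_Icc hti0 hti11 ht⟩
          · intro t ht
            show p (g s t) = p (σ (H (s, t)))
            rw [hglift s hsI t (Icc_subset_Icc hti0 hti11 ht),
              hσs _ (hrect s hs t ht)]
          · show g s ti = σ (H (s, ti))
            rw [(hIH s hs).2, hhor s hs]
        exact ⟨hrect s hs ti1 ⟨htile, le_refl _⟩, hvert ti1 ⟨htile, le_refl _⟩⟩
    obtain ⟨τ, W, hτc, hτs, hfin⟩ := key n (le_refl n)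
    have hdiv : ((n:ℕ):ℝ)/n = 1 := div_self (ne_of_gt hnpos)
    refine ⟨δ/2, half_pos hδ, ?_⟩
    intro s hs
    have h1 := (hfin s hs).2
    have h2 := (hfin s₀ hs₀A).2
    rw [hdiv] at h1 h2
    rw [h1, h2, htop s (hAsub hs), htop s₀ hs₀]
  -- globalize by preconnectedness of Icc 0 1
  choose! ε hεpos hεconst using LC
  by_contra hcon
  push_neg at hcon
  obtain ⟨sbad, hsbad, hbadne⟩ := hcon
  set O₁ : Set ℝ := ⋃ (s₀ : ℝ) (_ : s₀ ∈ Icc (0:ℝ) 1 ∧ g s₀ 1 = g 0 1), Metric.ball s₀ (ε s₀)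
  set O₂ : Set ℝ := ⋃ (s₀ : ℝ) (_ : s₀ ∈ Icc (0:ℝ) 1 ∧ g s₀ 1 ≠ g 0 1), Metric.ball s₀ (ε s₀)
  have hO₁ : IsOpen O₁ := isOpen_iUnion fun _ => isOpen_iUnion fun _ => Metric.isOpen_ball
  have hO₂ : IsOpen O₂ := isOpen_iUnion fun _ => isOpen_iUnion fun _ => Metric.isOpen_ball
  have hsub : Icc (0:ℝ) 1 ⊆ O₁ ∪ O₂ := by
    intro s hs
    by_cases h : g s 1 = g 0 1
    · exact Or.inl (Set.mem_iUnion.mpr ⟨s, Set.mem_iUnion.mpr ⟨⟨hs, h⟩,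
        Metric.mem_ball_self (hεpos s hs)⟩⟩)
    · exact Or.inr (Set.mem_iUnion.mpr ⟨s, Set.mem_iUnion.mpr ⟨⟨hs, h⟩,
        Metric.mem_ball_self (hεpos s hs)⟩⟩)
  have hne₁ : (Icc (0:ℝ) 1 ∩ O₁).Nonempty := by
    refine ⟨0, ⟨le_refl 0, zero_le_one⟩, Set.mem_iUnion.mpr ⟨0, Set.mem_iUnion.mpr
      ⟨⟨⟨le_refl 0, zero_le_one⟩, rfl⟩, Metric.mem_ball_self (hεpos 0 ⟨le_refl 0, zero_le_one⟩)⟩⟩⟩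
  have hne₂ : (Icc (0:ℝ) 1 ∩ O₂).Nonempty := by
    refine ⟨sbad, hsbad, Set.mem_iUnion.mpr ⟨sbad, Set.mem_iUnion.mpr
      ⟨⟨hsbad, hbadne⟩, Metric.mem_ball_self (hεpos sbad hsbad)⟩⟩⟩
  obtain ⟨x, hxI, hx₁, hx₂⟩ := isPreconnected_Icc O₁ O₂ hO₁ hO₂ hsub hne₁ hne₂
  obtain ⟨s₁, hs₁⟩ := Set.mem_iUnion.mp hx₁
  obtain ⟨⟨hs₁I, hs₁eq⟩, hxb₁⟩ := Set.mem_iUnion.mp hs₁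
  obtain ⟨s₂, hs₂⟩ := Set.mem_iUnion.mp hx₂
  obtain ⟨⟨hs₂I, hs₂ne⟩, hxb₂⟩ := Set.mem_iUnion.mp hs₂
  have e₁ : g x 1 = g s₁ 1 := hεconst s₁ hs₁I x ⟨hxb₁, hxI⟩
  have e₂ : g x 1 = g s₂ 1 := hεconst s₂ hs₂I x ⟨hxb₂, hxI⟩
  exact hs₂ne (by rw [← e₂, e₁, hs₁eq])


variable {a b : ℂ}

theorem continuous_E : Continuous (E a b) :=
  ((continuous_const.mul Complex.continuous_exp).add
    (continuous_const.mul (Complex.continuous_exp.comp continuous_neg)))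


/-- `exp z` is a root of the quadratic attached to `w = E z`. -/
theorem quad_exp (a b z : ℂ) :
    a * (Complex.exp z)^2 - (E a b z) * Complex.exp z + b = 0 := by
  have h := Complex.exp_ne_zero z
  unfold E
  rw [Complex.exp_neg]
  field_simp
  ring

/-- If `u ≠ 0` is a root of the quadratic for `w` and `exp ζ = u`, then `E ζ = w`. -/
theorem quad_root_E {u w ζ : ℂ} (hu : u ≠ 0) (h : a * u^2 - w*u + b = 0)
    (hζ : Complex.exp ζ = u) : E a b ζ = w := by
  unfold E
  rw [Complex.exp_neg, hζ]
  field_simp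
  linear_combination h


theorem locInj_E (hab : a * b ≠ 0) : LocInj (E a b) {w : ℂ | w ^ 2 ≠ 4 * a * b} := by
  have ha : a ≠ 0 := left_ne_zero_of_mul hab
  have hb : b ≠ 0 := right_ne_zero_of_mul hab
  intro z hz
  have hu : Complex.exp z ≠ 0 := Complex.exp_ne_zero z
  -- E'(z) ≠ 0, i.e. exp (2z) ≠ b/a
  have hne : Complex.exp (2*z) ≠ b / a := by
    intro h
    apply hz
    have hab' : a * Complex.exp (2*z) = b := by
      rw [h]; field_simp
    have h2 : Complex.exp (2*z) = (Complex.exp z)^2 := by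
      rw [← Complex.exp_nat_mul]; push_cast; ring_nf
    show (E a b z) ^ 2 = 4 * a * b
    unfold E
    rw [Complex.exp_neg]
    rw [h2] at hab'
    field_simp
    linear_combination (a*Complex.exp z^2 - b) * hab'
  set m : ℝ := ‖Complex.exp (2*z) - b/a‖ with hm
  have hmpos : 0 < m := by
    rw [hm, norm_pos_iff]
    exact sub_ne_zero.mpr hne
  obtain ⟨η, hη, hcont⟩ := Metric.continuousAt_iff.mp (Complex.continuous_exp.continuousAt
    (x := 2*z)) m hmpos
  set ρ : ℝ := min (η/2) 1 with hρ
  have hρpos : 0 < ρ := lt_min (half_pos hη) one_pos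
  refine ⟨Metric.ball z ρ, Metric.ball_mem_nhds z hρpos, ?_⟩
  intro x hx y hy hE
  have hx' : ‖x - z‖ < ρ := by
    rw [← Complex.dist_eq]; exact Metric.mem_ball.mp hx
  have hy' : ‖y - z‖ < ρ := by
    rw [← Complex.dist_eq]; exact Metric.mem_ball.mp hy
  have hux : Complex.exp x ≠ 0 := Complex.exp_ne_zero x
  have huy : Complex.exp y ≠ 0 := Complex.exp_ne_zero y
  have q₁ : a * (Complex.exp x)^2 - (E a b x) * Complex.exp x + b = 0 := quad_exp a b x
  have q₂ : a * (Complex.exp y)^2 - (E a b x) * Complex.exp y + b = 0 := by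
    rw [hE]; exact quad_exp a b y
  by_cases huv : Complex.exp x = Complex.exp y
  · obtain ⟨k, hk⟩ := Complex.exp_eq_exp_iff_exists_int.mp huv
    have habs : ‖x - y‖ < 2 := by
      calc ‖x - y‖ ≤ ‖x - z‖ + ‖z - y‖ := by
            simpa using norm_sub_le_norm_sub_add_norm_sub x z y
        _ < ρ + ρ := by
            have h' : ‖z - y‖ = ‖y - z‖ := by
              rw [← norm_neg]; ring_nf
            rw [h']
            exact add_lt_add hx' hy'
        _ ≤ 2 := by
            have : ρ ≤ 1 := min_le_right _ _
            linarith
    have hk0 : k = 0 := by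
      by_contra hk0
      have : ‖x - y‖ = |(k:ℝ)| * (2 * Real.pi) := by
        rw [hk, add_sub_cancel_left]
        simp only [norm_mul, Complex.norm_intCast, Complex.norm_two, Complex.norm_I,
          Complex.norm_real, Real.norm_eq_abs, mul_one]
        rw [abs_of_pos Real.pi_pos]
      have hk1 : (1:ℝ) ≤ |(k:ℝ)| := by
        rw [← Int.cast_abs]
        exact_mod_cast Int.one_le_abs (by exact_mod_cast hk0)
      have : (2:ℝ) * Real.pi ≤ ‖x - y‖ := by
        rw [this]
        nlinarith [Real.pi_pos]
      nlinarith [Real.pi_gt_three]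
    rw [hk0] at hk
    simpa using hk
  · -- the two roots are distinct, so their product is `b/a`
    have hfac : (Complex.exp x - Complex.exp y) *
        (a * (Complex.exp x + Complex.exp y) - E a b x) = 0 := by
      linear_combination q₁ - q₂
    have hwsum : a * (Complex.exp x + Complex.exp y) = E a b x := by
      rcases mul_eq_zero.mp hfac with h | h
      · exact absurd (sub_eq_zero.mp h) huv
      · exact sub_eq_zero.mp h
    have hprod : a * (Complex.exp x * Complex.exp y) = b := by
      linear_combination -q₁ + Complex.exp x * hwsum
    have hexy : Complex.exp (x + y) = b / a := by
      rw [Complex.exp_add]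
      field_simp
      linear_combination hprod
    have hdist : dist (x + y) (2*z) < η := by
      rw [Complex.dist_eq]
      calc ‖x + y - 2*z‖ = ‖(x - z) + (y - z)‖ := by ring_nf
        _ ≤ ‖x - z‖ + ‖y - z‖ := norm_add_le _ _
        _ < ρ + ρ := add_lt_add hx' hy'
        _ ≤ η := by
          have : ρ ≤ η/2 := min_le_left _ _
          linarith
    have := hcont hdist
    rw [hexy] at this
    have heq : dist (b/a) (Complex.exp (2*z)) = m := by
      rw [Complex.dist_eq, hm, ← norm_neg]
      congr 1
      ring
    rw [heq] at this
    exact absurd this (lt_irrefl m)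


set_option maxHeartbeats 1000000 in
theorem sec_E (hab : a * b ≠ 0) {U' : Set ℂ} (hopen : IsOpen U')
    (hcv : ∀ w ∈ U', w ^ 2 ≠ 4 * a * b) : Sec (E a b) U' := by
  have ha : a ≠ 0 := left_ne_zero_of_mul hab
  have hb : b ≠ 0 := right_ne_zero_of_mul hab
  intro w₀ hw₀
  have hd : w₀^2 - 4*a*b ≠ 0 := sub_ne_zero.mpr (hcv w₀ hw₀)
  set d : ℂ := w₀^2 - 4*a*b with hdd
  have hsqexp : ∀ x : ℂ, Complex.exp (x/2)^2 = Complex.exp x := by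
    intro x
    rw [sq, ← Complex.exp_add, add_halves]
  set c : ℂ := Complex.exp (Complex.log d / 2) with hc
  have hc2 : c^2 = d := by
    rw [hc, hsqexp, Complex.exp_log hd]
  have hcne : c ≠ 0 := Complex.exp_ne_zero _
  set r : ℂ → ℂ := fun w => c * Complex.exp (Complex.log ((w^2 - 4*a*b)/d) / 2) with hr
  have hrne : ∀ w, r w ≠ 0 := fun w => mul_ne_zero hcne (Complex.exp_ne_zero _)
  have hr2 : ∀ w : ℂ, w^2 - 4*a*b ≠ 0 → (r w)^2 = w^2 - 4*a*b := by
    intro w hw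
    show (c * Complex.exp (Complex.log ((w^2 - 4*a*b)/d) / 2))^2 = w^2 - 4*a*b
    rw [mul_pow, hsqexp, hsqexp, Complex.exp_log hd, Complex.exp_log (div_ne_zero hw hd)]
    field_simp
  -- the set where the ratio is in the slit plane
  set Ω : Set ℂ := {w : ℂ | (w^2 - 4*a*b)/d ∈ Complex.slitPlane} with hΩ
  have hratioc : Continuous fun w : ℂ => (w^2 - 4*a*b)/d :=
    ((continuous_pow 2).sub continuous_const).div_const d
  have hΩopen : IsOpen Ω := Complex.isOpen_slitPlane.preimage hratioc
  have hw₀Ω : w₀ ∈ Ω := by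
    have : (w₀^2 - 4*a*b)/d = 1 := by rw [← hdd]; exact div_self hd
    simp only [hΩ, Set.mem_setOf_eq, this]
    exact Complex.one_mem_slitPlane
  have hrcont : ContinuousOn r Ω := by
    intro w hw
    apply ContinuousWithinAt.mono _ (Set.subset_univ _)
    rw [continuousWithinAt_univ]
    exact continuousAt_const.mul (((hratioc.continuousAt.clog hw).div_const 2).cexp)
  -- the two root branches
  set u : ℂ → ℂ → ℂ := fun e w => (w + e * r w)/(2*a) with hudef
  have hucont : ∀ e : ℂ, ContinuousOn (u e) Ω := by
    intro e
    apply ContinuousOn.div_const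
    exact continuousOn_id.add (continuousOn_const.mul hrcont)
  have hquad : ∀ (e w : ℂ), e^2 = 1 → w^2 - 4*a*b ≠ 0 →
      a * (u e w)^2 - w * (u e w) + b = 0 := by
    intro e w he hw
    have h2a : (2*a) * (u e w) = w + e * r w := by
      rw [hudef]; field_simp
    have hkey : 4*a*(a * (u e w)^2 - w * (u e w) + b)
        = ((2*a)*(u e w))^2 - 2*w*((2*a)*(u e w)) + 4*a*b := by ring
    have : ((2*a)*(u e w))^2 - 2*w*((2*a)*(u e w)) + 4*a*b
        = e^2 * (r w)^2 - w^2 + 4*a*b := by rw [h2a]; ring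
    rw [this, he, one_mul, hr2 w hw] at hkey
    have h4 : 4*a*(a * (u e w)^2 - w * (u e w) + b) = 0 := by rw [hkey]; ring
    rcases mul_eq_zero.mp h4 with h | h
    · exact absurd h (by simp [ha])
    · exact h
  have hune : ∀ (e w : ℂ), e^2 = 1 → w^2 - 4*a*b ≠ 0 → u e w ≠ 0 := by
    intro e w he hw h0
    have := hquad e w he hw
    rw [h0] at this
    simp at this
    exact hb this
  have huw₀ne : ∀ e : ℂ, e^2 = 1 → u e w₀ ≠ 0 := fun e he => hune e w₀ he hd
  -- choose the ball V
  have hGopen : IsOpen (Ω ∩ ((Ω ∩ (u 1) ⁻¹' Metric.ball (u 1 w₀) (‖u 1 w₀‖/3))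
      ∩ ((Ω ∩ (u (-1)) ⁻¹' Metric.ball (u (-1) w₀) (‖u (-1) w₀‖/3)) ∩ U'))) := by
    refine hΩopen.inter (IsOpen.inter ?_ (IsOpen.inter ?_ hopen))
    · exact (hucont 1).isOpen_inter_preimage hΩopen Metric.isOpen_ball
    · exact (hucont (-1)).isOpen_inter_preimage hΩopen Metric.isOpen_ball
  have hw₀G : w₀ ∈ Ω ∩ ((Ω ∩ (u 1) ⁻¹' Metric.ball (u 1 w₀) (‖u 1 w₀‖/3))
      ∩ ((Ω ∩ (u (-1)) ⁻¹' Metric.ball (u (-1) w₀) (‖u (-1) w₀‖/3)) ∩ U')) := by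
    have h1 : 0 < ‖u 1 w₀‖ := norm_pos_iff.mpr (huw₀ne 1 (one_pow 2))
    have h2 : 0 < ‖u (-1) w₀‖ := norm_pos_iff.mpr (huw₀ne (-1) (by ring))
    have hm1 : u 1 w₀ ∈ Metric.ball (u 1 w₀) (‖u 1 w₀‖/3) :=
      Metric.mem_ball_self (by linarith)
    have hm2 : u (-1) w₀ ∈ Metric.ball (u (-1) w₀) (‖u (-1) w₀‖/3) :=
      Metric.mem_ball_self (by linarith)
    exact ⟨hw₀Ω, ⟨⟨hw₀Ω, Set.mem_preimage.mpr hm1⟩, ⟨⟨hw₀Ω, Set.mem_preimage.mpr hm2⟩, hw₀⟩⟩⟩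
  obtain ⟨ρ, hρpos, hρsub⟩ := Metric.isOpen_iff.mp hGopen w₀ hw₀G
  set V : Set ℂ := Metric.ball w₀ ρ with hV
  have hVsubG : ∀ w ∈ V, w ∈ Ω ∧ (‖u 1 w - u 1 w₀‖ < ‖u 1 w₀‖/3)
      ∧ (‖u (-1) w - u (-1) w₀‖ < ‖u (-1) w₀‖/3) ∧ w ∈ U' := by
    intro w hw
    have := hρsub hw
    refine ⟨this.1, ?_, ?_, this.2.2.2⟩
    · have := this.2.1.2
      rwa [Set.mem_preimage, Metric.mem_ball, Complex.dist_eq] at this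
    · have := this.2.2.1.2
      rwa [Set.mem_preimage, Metric.mem_ball, Complex.dist_eq] at this
  refine ⟨V, Metric.isOpen_ball, (convex_ball w₀ ρ).isPreconnected,
    Metric.mem_ball_self hρpos, fun w hw => (hVsubG w hw).2.2.2, ?_⟩
  -- construct the section through a given preimage point z
  intro z hz
  set w₁ : ℂ := E a b z with hw₁
  set u₁ : ℂ := Complex.exp z with hu₁
  have hu₁ne : u₁ ≠ 0 := Complex.exp_ne_zero z
  have hw₁U : w₁ ∈ U' := (hVsubG w₁ hz).2.2.2
  have hw₁d : w₁^2 - 4*a*b ≠ 0 := sub_ne_zero.mpr (hcv w₁ hw₁U)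
  have hq₁ : a * u₁^2 - w₁ * u₁ + b = 0 := by
    have := quad_exp a b z
    rw [← hw₁, ← hu₁] at this
    linear_combination this
  -- (2 a u₁ - w₁)² = (r w₁)²
  have hsq : (2*a*u₁ - w₁)^2 = (r w₁)^2 := by
    rw [hr2 w₁ hw₁d]
    linear_combination 4*a*hq₁
  have hdisj : (2*a*u₁ - w₁ - r w₁) * (2*a*u₁ - w₁ + r w₁) = 0 := by
    linear_combination hsq
  have hcases : ∃ e : ℂ, e^2 = 1 ∧ u₁ = u e w₁ := by
    rcases mul_eq_zero.mp hdisj with h | h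
    · refine ⟨1, one_pow 2, ?_⟩
      show u₁ = (w₁ + 1 * r w₁)/(2*a)
      have h2a : 2*a*u₁ = w₁ + 1 * r w₁ := by linear_combination h
      rw [← h2a]; field_simp
    · refine ⟨-1, by ring, ?_⟩
      show u₁ = (w₁ + (-1) * r w₁)/(2*a)
      have h2a : 2*a*u₁ = w₁ + (-1) * r w₁ := by linear_combination h
      rw [← h2a]; field_simp
  obtain ⟨e, he, hu₁e⟩ := hcases
  -- the branch condition for this e
  have hepm : e = 1 ∨ e = -1 := by
    have h0 : (e - 1) * (e + 1) = 0 := by linear_combination he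
    rcases mul_eq_zero.mp h0 with h | h
    · exact Or.inl (by linear_combination h)
    · exact Or.inr (by linear_combination h)
  have hbranch : ∀ w ∈ V, ‖u e w - u e w₀‖ < ‖u e w₀‖/3 := by
    intro w hw
    rcases hepm with h1 | h1
    · rw [h1]; exact (hVsubG w hw).2.1
    · rw [h1]; exact (hVsubG w hw).2.2.1
  have hw₁V : w₁ ∈ V := hz
  set β : ℝ := ‖u e w₀‖ with hβ
  have hβpos : 0 < β := by
    rw [hβ]
    exact norm_pos_iff.mpr (hune e w₀ he hd)
  have hu₁lb : 2*β/3 < ‖u₁‖ := by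
    have h1 : ‖u₁ - u e w₀‖ < β/3 := by
      have := hbranch w₁ hw₁V
      rw [← hu₁e] at this
      exact this
    have h2 : β ≤ ‖u₁‖ + ‖u₁ - u e w₀‖ := by
      calc β = ‖u₁ - (u₁ - u e w₀)‖ := by rw [hβ]; congr 1; ring
        _ ≤ ‖u₁‖ + ‖u₁ - u e w₀‖ := by
            rw [sub_eq_add_neg]
            refine (norm_add_le _ _).trans ?_
            rw [norm_neg]
    linarith
  have hnum : ∀ w ∈ V, ‖u e w - u₁‖ < 2*β/3 := by
    intro w hw
    have h1 := hbranch w hw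
    have h2 : ‖u e w₀ - u₁‖ < β/3 := by
      have := hbranch w₁ hw₁V
      rw [← hu₁e, ← norm_neg] at this
      simpa [neg_sub] using this
    calc ‖u e w - u₁‖
        = ‖(u e w - u e w₀) + (u e w₀ - u₁)‖ := by congr 1; ring
      _ ≤ ‖u e w - u e w₀‖ + ‖u e w₀ - u₁‖ := norm_add_le _ _
      _ < β/3 + β/3 := add_lt_add h1 h2
      _ = 2*β/3 := by ring
  have hratio : ∀ w ∈ V, ‖u e w / u₁ - 1‖ < 1 := by
    intro w hw
    have heq : u e w / u₁ - 1 = (u e w - u₁)/u₁ := by field_simp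
    rw [heq, norm_div]
    rw [div_lt_one (by linarith [hu₁lb, hβpos] : 0 < ‖u₁‖)]
    calc ‖u e w - u₁‖ < 2*β/3 := hnum w hw
      _ < ‖u₁‖ := hu₁lb
  have hslit : ∀ w ∈ V, u e w / u₁ ∈ Complex.slitPlane := by
    intro w hw
    have h1 : ‖u e w / u₁ - 1‖ < 1 := hratio w hw
    have h2 := Complex.mem_slitPlane_of_norm_lt_one h1
    have h3 : (1:ℂ) + (u e w / u₁ - 1) = u e w / u₁ := by ring
    rwa [h3] at h2
  have hVΩ : V ⊆ Ω := fun w hw => (hVsubG w hw).1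
  refine ⟨fun w => z + Complex.log (u e w / u₁), ?_, ?_, ?_⟩
  · apply continuousOn_const.add
    exact ContinuousOn.clog (((hucont e).mono hVΩ).div_const u₁) hslit
  · intro v hv
    have hvd : v^2 - 4*a*b ≠ 0 := sub_ne_zero.mpr (hcv v (hVsubG v hv).2.2.2)
    have huv0 : u e v ≠ 0 := hune e v he hvd
    have hexp : Complex.exp (z + Complex.log (u e v / u₁)) = u e v := by
      rw [Complex.exp_add, Complex.exp_log (div_ne_zero huv0 hu₁ne), ← hu₁]
      field_simp
    exact quad_root_E huv0 (hquad e v he hvd) hexp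
  · show z + Complex.log (u e (E a b z) / u₁) = z
    rw [← hw₁, ← hu₁e, div_self hu₁ne, Complex.log_one, add_zero]


end CovAux

open CovAux

/-- over a simply connected open set avoiding the critical values,
every component of the preimage maps bijectively. -/
theorem preimage_components_bijective (a b : ℂ) (hab : a * b ≠ 0)
    (U' : Set ℂ) (hopen : IsOpen U') (hsc : SimplyConnectedSpace ↥U')
    (hcv : ∀ w ∈ U', w ^ 2 ≠ 4 * a * b)
    (z : ℂ) (hz : z ∈ E a b ⁻¹' U') :
    Set.BijOn (E a b) (connectedComponentIn (E a b ⁻¹' U') z) U' := by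
  haveI := hsc
  set S : Set ℂ := E a b ⁻¹' U' with hS
  set W : Set ℂ := connectedComponentIn S z with hW
  have hSopen : IsOpen S := hopen.preimage continuous_E
  have hWopen : IsOpen W := hSopen.connectedComponentIn
  have hWsub : W ⊆ S := connectedComponentIn_subset S z
  have hzW : z ∈ W := mem_connectedComponentIn hz
  have hUpre : IsPreconnected U' := by
    rw [isPreconnected_iff_preconnectedSpace]
    infer_instance
  have hsec : Sec (E a b) U' := sec_E hab hopen hcv
  have hinj : LocInj (E a b) U' := by
    intro ζ hζ
    exact locInj_E hab ζ (hcv _ hζ)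
  choose! V hVo hVpre hVmem hVsub hVs using hsec
  have hsec2 : Sec (E a b) U' := fun w hw => ⟨V w, hVo w hw, hVpre w hw, hVmem w hw,
    hVsub w hw, hVs w hw⟩
  -- key: if V w meets E '' W then V w ⊆ E '' W
  have hkey : ∀ w ∈ U', (V w ∩ E a b '' W).Nonempty → V w ⊆ E a b '' W := by
    rintro w hw ⟨v, hvV, ζ, hζW, hζv⟩
    obtain ⟨s, hscont, hsproj, hsz⟩ := hVs w hw ζ (by rw [hζv]; exact hvV)
    have hsVW : s '' (V w) ⊆ W := by
      have hpre : IsPreconnected (s '' (V w)) := (hVpre w hw).image s hscont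
      have hsub : s '' (V w) ⊆ S := by
        rintro x ⟨v', hv', rfl⟩
        show E a b (s v') ∈ U'
        rw [hsproj v' hv']
        exact hVsub w hw hv'
      have hζmem : ζ ∈ s '' (V w) := ⟨E a b ζ, by rw [hζv]; exact hvV, hsz⟩
      have := hpre.subset_connectedComponentIn hζmem hsub
      rwa [← connectedComponentIn_eq (hζW : ζ ∈ connectedComponentIn S z)] at this
    intro v' hv'
    exact ⟨s v', hsVW ⟨v', hv', rfl⟩, hsproj v' hv'⟩
  -- surjectivity
  have hsurj : Set.SurjOn (E a b) W U' := by
    intro w hw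
    by_contra hwE
    set O₁ : Set ℂ := ⋃ (w' : ℂ) (_ : w' ∈ U' ∧ (V w' ∩ E a b '' W).Nonempty), V w' with hO₁
    set O₂ : Set ℂ := ⋃ (w' : ℂ) (_ : w' ∈ U' ∧ ¬(V w' ∩ E a b '' W).Nonempty), V w' with hO₂
    have hO₁o : IsOpen O₁ := isOpen_iUnion fun w' => isOpen_iUnion fun h => hVo w' h.1
    have hO₂o : IsOpen O₂ := isOpen_iUnion fun w' => isOpen_iUnion fun h => hVo w' h.1
    have hcover : U' ⊆ O₁ ∪ O₂ := by
      intro w' hw'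
      by_cases h : (V w' ∩ E a b '' W).Nonempty
      · exact Or.inl (Set.mem_iUnion.mpr ⟨w', Set.mem_iUnion.mpr ⟨⟨hw', h⟩, hVmem w' hw'⟩⟩)
      · exact Or.inr (Set.mem_iUnion.mpr ⟨w', Set.mem_iUnion.mpr ⟨⟨hw', h⟩, hVmem w' hw'⟩⟩)
    have hne₁ : (U' ∩ O₁).Nonempty := by
      refine ⟨E a b z, hz, Set.mem_iUnion.mpr ⟨E a b z, Set.mem_iUnion.mpr
        ⟨⟨hz, ⟨E a b z, hVmem _ hz, z, hzW, rfl⟩⟩, hVmem _ hz⟩⟩⟩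
    have hne₂ : (U' ∩ O₂).Nonempty := by
      refine ⟨w, hw, Set.mem_iUnion.mpr ⟨w, Set.mem_iUnion.mpr ⟨⟨hw, ?_⟩, hVmem _ hw⟩⟩⟩
      rintro ⟨v, hvV, hvE⟩
      exact hwE (hkey w hw ⟨v, hvV, hvE⟩ (hVmem _ hw))
    obtain ⟨x, hxU, hx₁, hx₂⟩ := hUpre O₁ O₂ hO₁o hO₂o hcover hne₁ hne₂
    obtain ⟨w₁, hw₁⟩ := Set.mem_iUnion.mp hx₁
    obtain ⟨⟨hw₁U, hw₁ne⟩, hxV₁⟩ := Set.mem_iUnion.mp hw₁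
    obtain ⟨w₂, hw₂⟩ := Set.mem_iUnion.mp hx₂
    obtain ⟨⟨hw₂U, hw₂ne⟩, hxV₂⟩ := Set.mem_iUnion.mp hw₂
    exact hw₂ne ⟨x, hxV₂, hkey w₁ hw₁U hw₁ne hxV₁⟩
  -- injectivity
  have hinjOn : Set.InjOn (E a b) W := by
    intro z₁ hz₁ z₂ hz₂ hE12
    -- path from z₁ to z₂ in W
    have hWconn : IsConnected W := by
      rw [hW, isConnected_connectedComponentIn_iff]
      exact hz
    have hWpath : IsPathConnected W := hWopen.isConnected_iff_isPathConnected.mp hWconn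
    obtain ⟨γp, hγp⟩ := hWpath.joinedIn z₁ hz₁ z₂ hz₂
    set γ : ℝ → ℂ := fun t => γp (Set.projIcc 0 1 zero_le_one t) with hγdef
    have hγc : Continuous γ := γp.continuous.comp continuous_projIcc
    have hγ0 : γ 0 = z₁ := by
      rw [hγdef]; simp [Set.projIcc_left]
    have hγ1 : γ 1 = z₂ := by
      rw [hγdef]; simp [Set.projIcc_right]
    have hγW : ∀ t : ℝ, γ t ∈ W := fun t => hγp _
    set w₀ : ℂ := E a b z₁ with hw₀
    have hw₀U : w₀ ∈ U' := hWsub hz₁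
    -- the loop in U'
    have hlpc : Continuous fun t : unitInterval => (⟨E a b (γp t), hWsub (hγp t)⟩ : ↥U') := by
      apply Continuous.subtype_mk
      exact continuous_E.comp γp.continuous
    set lp : Path (⟨w₀, hw₀U⟩ : ↥U') ⟨w₀, hw₀U⟩ :=
      Path.mk (ContinuousMap.mk (fun t => (⟨E a b (γp t), hWsub (hγp t)⟩ : ↥U')) hlpc)
        (Subtype.ext (by simp [γp.source, hw₀]))
        (Subtype.ext (by simp [γp.target, hw₀, ← hE12])) with hlp
    obtain ⟨F⟩ := SimplyConnectedSpace.paths_homotopic lp (Path.refl (⟨w₀, hw₀U⟩ : ↥U'))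
    set pj : ℝ → unitInterval := Set.projIcc 0 1 zero_le_one with hpj
    set H : ℝ × ℝ → ℂ := fun q => ((F (pj q.1, pj q.2) : ↥U') : ℂ) with hH
    have hHc : Continuous H := by
      apply continuous_subtype_val.comp
      exact F.continuous.comp ((continuous_projIcc.comp continuous_fst).prodMk
        (continuous_projIcc.comp continuous_snd))
    have hHmaps : ∀ q ∈ (Icc (0:ℝ) 1) ×ˢ (Icc (0:ℝ) 1), H q ∈ U' :=
      fun q _ => (F (pj q.1, pj q.2)).2
    have hbot : ∀ s ∈ Icc (0:ℝ) 1, H (s, 0) = E a b z₁ := by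
      intro s _
      have h0 : pj (0:ℝ) = 0 := by
        apply Subtype.ext; simp [hpj, Set.projIcc_left]
      rw [hH]
      simp only [h0]
      have := F.eq_fst (pj s) (x := 0) (by simp)
      rw [this]
      show ((lp 0 : ↥U') : ℂ) = E a b z₁
      rw [lp.source]
    have htop : ∀ s ∈ Icc (0:ℝ) 1, H (s, 1) = H (0, 1) := by
      intro s _
      have h1 : pj (1:ℝ) = 1 := by
        apply Subtype.ext; simp [hpj, Set.projIcc_right]
      rw [hH]
      simp only [h1]
      rw [F.eq_fst (pj s) (x := 1) (by simp), F.eq_fst (pj 0) (x := 1) (by simp)]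
    -- lifts
    have hγlift : ∀ t ∈ Icc (0:ℝ) 1, E a b (γ t) = H (0, t) := by
      intro t _
      have h0 : pj (0:ℝ) = 0 := by
        apply Subtype.ext; simp [hpj, Set.projIcc_left]
      rw [hH]
      simp only [h0]
      rw [F.apply_zero]
      show E a b (γ t) = ((lp (pj t) : ↥U') : ℂ)
      rfl
    have hchoice : ∀ s : ℝ, s ∈ Icc (0:ℝ) 1 → ∃ g : ℝ → ℂ,
        ContinuousOn g (Icc 0 1) ∧ g 0 = z₁ ∧ ∀ t ∈ Icc (0:ℝ) 1, E a b (g t) = H (s, t) := by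
      intro s hs
      apply lift_exists hsec2 (hHc.comp (continuous_const.prodMk continuous_id))
        (fun t ht => hHmaps (s, t) ⟨hs, ht⟩)
      exact (hbot s hs).symm
    choose! gc hgcc hgc0 hgclift using hchoice
    set g : ℝ → ℝ → ℂ := fun s => if s = 0 then γ else if s = 1 then (fun _ => z₁) else gc s
      with hg
    have hg0eq : g 0 = γ := by rw [hg]; norm_num
    have hg1eq : g 1 = fun _ => z₁ := by rw [hg]; norm_num
    have hgother : ∀ s : ℝ, s ≠ 0 → s ≠ 1 → g s = gc s := by
      intro s h0 h1
      rw [hg]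
      simp [h0, h1]
    have hgC : ∀ s ∈ Icc (0:ℝ) 1, ContinuousOn (g s) (Icc 0 1) := by
      intro s hs
      by_cases h0 : s = 0
      · subst h0; rw [hg0eq]; exact hγc.continuousOn
      · by_cases h1 : s = 1
        · subst h1; rw [hg1eq]; exact continuousOn_const
        · rw [hgother s h0 h1]; exact hgcc s hs
    have hg0' : ∀ s ∈ Icc (0:ℝ) 1, g s 0 = z₁ := by
      intro s hs
      by_cases h0 : s = 0
      · subst h0; rw [hg0eq]; exact hγ0
      · by_cases h1 : s = 1
        · subst h1; rw [hg1eq]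
        · rw [hgother s h0 h1]; exact hgc0 s hs
    have hglift : ∀ s ∈ Icc (0:ℝ) 1, ∀ t ∈ Icc (0:ℝ) 1, E a b (g s t) = H (s, t) := by
      intro s hs t ht
      by_cases h0 : s = 0
      · subst h0; rw [hg0eq]; exact hγlift t ht
      · by_cases h1 : s = 1
        · subst h1; rw [hg1eq]
          have hp1 : pj (1:ℝ) = 1 := Subtype.ext (by simp [hpj, Set.projIcc_right])
          rw [hH]
          simp only [hp1]
          rw [F.apply_one]
          show E a b z₁ = ((Path.refl (⟨w₀, hw₀U⟩ : ↥U')) (pj t) : ℂ)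
          simp [Path.refl_apply, hw₀]
        · rw [hgother s h0 h1]; exact hgclift s hs t ht
    have hmono := monodromy hinj hsec2 hHc hHmaps htop hbot hgC hg0' hglift
    have h1I : (1:ℝ) ∈ Icc (0:ℝ) 1 := ⟨zero_le_one, le_refl 1⟩
    have e1 : g 1 1 = g 0 1 := hmono 1 h1I
    have hg11 : g 1 1 = z₁ := by rw [hg1eq]
    have hg01 : g 0 1 = z₂ := by rw [hg0eq]; exact hγ1
    rw [hg11, hg01] at e1
    exact e1
  exact ⟨fun x hx => hWsub hx, hinjOn, hsurj⟩
end
end
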